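/- For all nonzero reals f, p with f ≠ p and all Q ∈ ℝ, setting d = f-p, the point (Q/(pd)+1, fQ/(pd), Q/d, Q/(fd)+p/f, pQ/(fd)-pd/f) lies in D; that is, the P-line P(f,p) parametrized by Q is contained in D. -/

import Mathlib

theorem P_line_in_D (f p Q : ℝ) (hf : f ≠ 0) (hp : p ≠ 0) (hfp : f ≠ p) :
    let d := f - p
    let v := Q / (p * d) + 1
    let b := f * Q / (p * d)
    let r := Q / d
    let k := Q / (f * d) + p / f
    let l := p * Q / (f * d) - p * d / f
    v * r = b * k ∧ r * (k - 1) = l * (v - 1) := by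
  intro d v b r k l
  have hd : d ≠ 0 := sub_ne_zero.mpr hfp
  constructor <;> (simp only [v, b, r, k, l, d]; field_simp <;> ring)
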